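/- arXiv:2003.06292 — 3 statements merged into one kernel-verified Lean document; each statement's English description precedes it below -/
import Mathlib

section
/- Let k be a field with char(k) ≠ 2, l ≥ 2, μ ∈ k^×, λ ∈ k^×, and let g = [[α, X, Y],[E, A, B],[F, C, D]] ∈ M_{2l+1}(k) (where A,B,C,D are l×l, X,Y are 1×l rows, E,F are l×1 columns, α ∈ k) satisfy ᵀg·β·g = μ·β for β = [[2,0,0],[0,0,I_l],[0,I_l,0]]. If A = diag(1,…,1,λ) and X = 0, then C has the form C = [[C₁₁, −λ·ᵀC₂₁],[C₂₁, 0]], where C₁₁ is a skew-symmetric matrix of size l−1 and the (l,l) entry of C is 0. -/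
open Matrix

/-- `char k ≠ 2`, `l = r + 1 ≥ 2`. If
`g = [[α,X,Y],[E,A,B],[F,C,D]]` satisfies `ᵀg β g = μ β` for
`β = [[2,0,0],[0,0,1],[0,1,0]]`, with `A = diag(1,…,1,λ)` and `X = 0`, then
`C = [[C₁₁, −λ·ᵀC₂₁],[C₂₁, 0]]` with `C₁₁` skew-symmetric and the `(l,l)` entry of `C`
equal to `0`. -/
theorem stmt_12 {k : Type*} [Field k] (hchar : (2 : k) ≠ 0) (r : ℕ) (hr : 1 ≤ r)
    (lam μ : k) (hlam : lam ≠ 0) (hμ : μ ≠ 0) (α : k)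
    (X Y : Matrix (Fin 1) (Fin r ⊕ Fin 1) k)
    (E F : Matrix (Fin r ⊕ Fin 1) (Fin 1) k)
    (A B C D : Matrix (Fin r ⊕ Fin 1) (Fin r ⊕ Fin 1) k)
    (hA : A = Matrix.fromBlocks (1 : Matrix (Fin r) (Fin r) k) 0 0
      (lam • (1 : Matrix (Fin 1) (Fin 1) k)))
    (hX : X = 0)
    (hg : (Matrix.fromBlocks (α • (1 : Matrix (Fin 1) (Fin 1) k))
          (Matrix.fromCols X Y) (Matrix.fromRows E F) (Matrix.fromBlocks A B C D))ᵀ *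
        Matrix.fromBlocks ((2 : k) • (1 : Matrix (Fin 1) (Fin 1) k)) 0 0
          (Matrix.fromBlocks 0 1 1 0) *
        Matrix.fromBlocks (α • (1 : Matrix (Fin 1) (Fin 1) k))
          (Matrix.fromCols X Y) (Matrix.fromRows E F) (Matrix.fromBlocks A B C D) =
      μ • Matrix.fromBlocks ((2 : k) • (1 : Matrix (Fin 1) (Fin 1) k)) 0 0
        (Matrix.fromBlocks 0 1 1 0)) :
    (C.toBlocks₁₁)ᵀ = -C.toBlocks₁₁ ∧ C.toBlocks₁₂ = -(lam • (C.toBlocks₂₁)ᵀ) ∧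
      C.toBlocks₂₂ = 0 := by
  subst hX hA
  rw [Matrix.fromBlocks_transpose, Matrix.transpose_fromCols, Matrix.transpose_fromRows,
      Matrix.fromBlocks_multiply, Matrix.fromBlocks_multiply,
      Matrix.fromBlocks_smul, Matrix.fromBlocks_inj] at hg
  obtain ⟨-, -, -, h⟩ := hg
  simp only [Matrix.mul_zero, Matrix.zero_mul, Matrix.transpose_zero, add_zero, zero_add,
    Matrix.mul_one, Matrix.one_mul, smul_zero] at h
  rw [Matrix.fromRows_mul, Matrix.fromRows_mul_fromCols] at h
  simp only [Matrix.fromBlocks_transpose, Matrix.fromBlocks_smul, smul_zero, Matrix.fromBlocks_multiply,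
    Matrix.fromBlocks_add, Matrix.zero_mul, Matrix.mul_zero, zero_add, add_zero,
    Matrix.fromBlocks_inj] at h
  obtain ⟨h11, -, -, -⟩ := h
  rw [← Matrix.fromBlocks_toBlocks C] at h11
  simp only [Matrix.fromBlocks_transpose, Matrix.transpose_one, Matrix.transpose_zero,
    Matrix.transpose_smul, Matrix.fromBlocks_multiply, Matrix.fromBlocks_add,
    Matrix.mul_one, Matrix.one_mul, Matrix.mul_zero, Matrix.zero_mul, add_zero, zero_add,
    Matrix.mul_smul, Matrix.smul_mul] at h11
  rw [← Matrix.fromBlocks_zero, Matrix.fromBlocks_inj] at h11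
  obtain ⟨e1, e2, e3, e4⟩ := h11
  refine ⟨eq_neg_of_add_eq_zero_left e1, ?_, ?_⟩
  · simpa using eq_neg_of_add_eq_zero_right e2
  · have h0 := congrFun (congrFun e4 0) 0
    simp only [Matrix.add_apply, Matrix.smul_apply, Matrix.transpose_apply, Matrix.one_apply,
      Matrix.zero_apply, smul_eq_mul] at h0
    ext i j
    rw [Subsingleton.elim i 0, Subsingleton.elim j 0]
    have h0' : lam * C.toBlocks₂₂ 0 0 * 2 = 0 := by linear_combination h0
    rcases mul_eq_zero.mp h0' with h' | h'
    · rcases mul_eq_zero.mp h' with h'' | h''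
      · exact absurd h'' hlam
      · simpa using h''
    · exact absurd h' hchar
end

section
/- Let k be a field with char(k) ≠ 2, l ≥ 1, μ ∈ k^×, and let g = [[α, X, Y],[E, A, B],[F, 0, D]] ∈ M_{2l+1}(k) (where A,B,D are l×l, X,Y are 1×l rows, E,F are l×1 columns, α ∈ k, and the block in position (3,2) is the zero matrix) satisfy ᵀg·β·g = μ·β for β = [[2,0,0],[0,0,I_l],[0,I_l,0]]. Then X = 0, the matrix A is invertible, and D = μ·ᵀA^{−1}. -/
open Matrix

/-- `char k ≠ 2`, `l ≥ 1`. If `g = [[α,X,Y],[E,A,B],[F,0,D]]` satisfies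
`ᵀg β g = μ β` for `β = [[2,0,0],[0,0,1],[0,1,0]]`, then `X = 0`, `A` is invertible, and
`D = μ · ᵀA⁻¹`. -/
theorem stmt_13 {k : Type*} [Field k] (hchar : (2 : k) ≠ 0) (l : ℕ) (hl : 1 ≤ l)
    (μ : k) (hμ : μ ≠ 0) (α : k)
    (X Y : Matrix (Fin 1) (Fin l) k)
    (E F : Matrix (Fin l) (Fin 1) k)
    (A B D : Matrix (Fin l) (Fin l) k)
    (hg : (Matrix.fromBlocks (α • (1 : Matrix (Fin 1) (Fin 1) k))
          (Matrix.fromCols X Y) (Matrix.fromRows E F) (Matrix.fromBlocks A B 0 D))ᵀ *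
        Matrix.fromBlocks ((2 : k) • (1 : Matrix (Fin 1) (Fin 1) k)) 0 0
          (Matrix.fromBlocks 0 1 1 0) *
        Matrix.fromBlocks (α • (1 : Matrix (Fin 1) (Fin 1) k))
          (Matrix.fromCols X Y) (Matrix.fromRows E F) (Matrix.fromBlocks A B 0 D) =
      μ • Matrix.fromBlocks ((2 : k) • (1 : Matrix (Fin 1) (Fin 1) k)) 0 0
        (Matrix.fromBlocks 0 1 1 0)) :
    X = 0 ∧ IsUnit A ∧ D = μ • (Aᵀ)⁻¹ := by
  simp only [Matrix.fromBlocks_transpose, Matrix.transpose_fromCols, Matrix.transpose_fromRows, Matrix.fromBlocks_multiply, Matrix.fromCols_mul_fromRows, Matrix.fromRows_mul_fromCols, Matrix.fromCols_mul_fromBlocks, Matrix.fromBlocks_mul_fromRows, Matrix.fromBlocks_smul, Matrix.transpose_smul, Matrix.transpose_one, Matrix.fromBlocks_inj] at hg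
  obtain ⟨h11, h12, h21, h22⟩ := hg
  simp only [Matrix.mul_zero, Matrix.zero_mul, Matrix.mul_one, Matrix.one_mul, Matrix.transpose_zero, add_zero, zero_add, smul_zero, Matrix.mul_smul, Matrix.smul_mul, Matrix.fromRows_mul_fromCols, Matrix.fromBlocks_multiply, Matrix.fromBlocks_smul, Matrix.fromBlocks_add, Matrix.fromBlocks_inj] at h22
  obtain ⟨hXX, hAD, hDA, -⟩ := h22
  have hX : X = 0 := by
    ext i j
    have hi : i = 0 := Subsingleton.elim _ _
    subst hi
    have h := congrFun (congrFun hXX j) j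
    simp only [Matrix.smul_apply, Matrix.zero_apply, smul_eq_mul, Matrix.mul_apply,
      Fin.sum_univ_one, Matrix.transpose_apply] at h
    rcases mul_eq_zero.mp h with h | h
    · exact absurd h hchar
    · simpa using mul_self_eq_zero.mp h
  rw [hX] at hAD
  simp only [Matrix.transpose_zero, Matrix.zero_mul, Matrix.mul_zero, smul_zero,
    zero_add] at hAD
  have hAD' : Aᵀ * (μ⁻¹ • D) = 1 := by
    rw [Matrix.mul_smul, hAD, smul_smul, inv_mul_cancel₀ hμ, one_smul]
  have hUA : IsUnit A := by
    have : IsUnit Aᵀ := (Matrix.isUnit_iff_isUnit_det _).mpr (Matrix.isUnit_det_of_right_inverse hAD')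
    rw [Matrix.isUnit_iff_isUnit_det, Matrix.det_transpose,
      ← Matrix.isUnit_iff_isUnit_det] at this
    exact this
  have hinv : (Aᵀ)⁻¹ = μ⁻¹ • D := Matrix.inv_eq_right_inv hAD'
  refine ⟨hX, hUA, ?_⟩
  rw [hinv, smul_smul, mul_inv_cancel₀ hμ, one_smul]
end

section
/- Let k be a field with char(k) ≠ 2, l ≥ 1, μ ∈ k^×, and let g = [[α, 0, Y],[0, A, B],[F, 0, D]] ∈ M_{2l+1}(k), where A is an invertible diagonal l×l matrix, B,D are l×l, Y is a 1×l row, F is an l×1 column, and α ∈ k. Then ᵀg·β·g = μ·β for β = [[2,0,0],[0,0,I_l],[0,I_l,0]] if and only if α² = μ, F = 0, Y = 0, D = μ·A^{−1}, and ᵀD·B + ᵀB·D = 0. -/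
open Matrix

/-- `char k ≠ 2`, `l ≥ 1`.  Let `g = [[α,0,Y],[0,A,B],[F,0,D]]` with `A` an
invertible diagonal matrix.  Then `ᵀg β g = μ β` for `β = [[2,0,0],[0,0,1],[0,1,0]]` if and
only if `α² = μ`, `F = 0`, `Y = 0`, `D = μ · A⁻¹` and `ᵀD·B + ᵀB·D = 0`. -/
theorem stmt_14 {k : Type*} [Field k] (hchar : (2 : k) ≠ 0) (l : ℕ) (hl : 1 ≤ l)
    (μ : k) (hμ : μ ≠ 0) (α : k)
    (Y : Matrix (Fin 1) (Fin l) k)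
    (F : Matrix (Fin l) (Fin 1) k)
    (d : Fin l → k) (hd : ∀ i, d i ≠ 0)
    (A B D : Matrix (Fin l) (Fin l) k)
    (hA : A = Matrix.diagonal d) :
    ((Matrix.fromBlocks (α • (1 : Matrix (Fin 1) (Fin 1) k))
          (Matrix.fromCols 0 Y) (Matrix.fromRows 0 F) (Matrix.fromBlocks A B 0 D))ᵀ *
        Matrix.fromBlocks ((2 : k) • (1 : Matrix (Fin 1) (Fin 1) k)) 0 0
          (Matrix.fromBlocks 0 1 1 0) *
        Matrix.fromBlocks (α • (1 : Matrix (Fin 1) (Fin 1) k))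
          (Matrix.fromCols 0 Y) (Matrix.fromRows 0 F) (Matrix.fromBlocks A B 0 D) =
      μ • Matrix.fromBlocks ((2 : k) • (1 : Matrix (Fin 1) (Fin 1) k)) 0 0
        (Matrix.fromBlocks 0 1 1 0)) ↔
    (α ^ 2 = μ ∧ F = 0 ∧ Y = 0 ∧ D = μ • A⁻¹ ∧ Dᵀ * B + Bᵀ * D = 0) := by
  have hdet : A.det ≠ 0 := by
    rw [hA, Matrix.det_diagonal]
    exact Finset.prod_ne_zero_iff.2 fun i _ => hd i
  have hAinv : A * A⁻¹ = 1 := Matrix.mul_nonsing_inv A (isUnit_iff_ne_zero.2 hdet)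
  have hAinv' : A⁻¹ * A = 1 := Matrix.nonsing_inv_mul A (isUnit_iff_ne_zero.2 hdet)
  have hAT : Aᵀ = A := by rw [hA, Matrix.diagonal_transpose]
  constructor
  · intro h
    simp only [Matrix.fromBlocks_transpose, Matrix.transpose_fromCols, Matrix.transpose_fromRows,
      Matrix.fromBlocks_multiply, Matrix.fromCols_mul_fromBlocks, Matrix.fromBlocks_mul_fromRows,
      Matrix.fromRows_mul_fromCols, Matrix.fromCols_mul_fromRows, Matrix.fromRows_mul,
      Matrix.mul_fromCols, Matrix.fromBlocks_smul, Matrix.transpose_smul, Matrix.transpose_zero,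
      Matrix.transpose_one, Matrix.smul_mul, Matrix.mul_smul, Matrix.mul_zero, Matrix.zero_mul,
      Matrix.mul_one, Matrix.one_mul, add_zero, zero_add, smul_smul, smul_zero,
      Matrix.fromBlocks_inj] at h
    obtain ⟨h1, h2, h3, h4⟩ := h
    have hα : α ^ 2 = μ := by
      have := congrFun (congrFun h1 0) 0
      simp only [Matrix.smul_apply, Matrix.one_apply_eq, smul_eq_mul, mul_one] at this
      have h2' : 2 * (α * α) = 2 * μ := by ring_nf; ring_nf at this; linear_combination this
      have := mul_left_cancel₀ hchar h2'
      rw [sq]; exact this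
    have hFA : Fᵀ * A = 0 := by
      ext i j
      have := congrFun (congrFun h2 i) (Sum.inl j)
      simpa [Matrix.fromCols, Matrix.add_apply, Matrix.smul_apply] using this
    have hF : F = 0 := by
      have hFT : Fᵀ = 0 := by
        calc Fᵀ = Fᵀ * A * A⁻¹ := by rw [Matrix.mul_assoc, hAinv, Matrix.mul_one]
        _ = 0 := by rw [hFA, Matrix.zero_mul]
      calc F = Fᵀᵀ := by rw [Matrix.transpose_transpose]
      _ = 0 := by rw [hFT, Matrix.transpose_zero]
    have hα0 : α ≠ 0 := by
      intro h0
      rw [h0] at hα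
      exact hμ (by simpa using hα.symm)
    have hY : Y = 0 := by
      have hY2 : (2 * α) • Y = 0 := by
        ext i j
        have := congrFun (congrFun h2 i) (Sum.inr j)
        simpa [hF, Matrix.fromCols, Matrix.add_apply, Matrix.smul_apply] using this
      rcases smul_eq_zero.1 hY2 with h | h
      · exact absurd h (mul_ne_zero hchar hα0)
      · exact h
    rw [hY] at h4
    simp only [Matrix.transpose_zero, Matrix.mul_zero, Matrix.zero_mul,
      Matrix.fromRows_zero, Matrix.fromCols_zero, smul_zero, zero_add,
      Matrix.fromBlocks_inj] at h4
    obtain ⟨-, hAD, -, hDB⟩ := h4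
    refine ⟨hα, hF, hY, ?_, hDB⟩
    have hAD' : A * D = μ • 1 := by rw [← hAT]; exact hAD
    calc D = A⁻¹ * (A * D) := by rw [← Matrix.mul_assoc, hAinv', Matrix.one_mul]
    _ = μ • A⁻¹ := by rw [hAD', Matrix.mul_smul, Matrix.mul_one]
  · rintro ⟨hα, hF, hY, hD, hDB⟩
    have hiT : A⁻¹ᵀ = A⁻¹ := by rw [Matrix.transpose_nonsing_inv, hAT]
    have hAD : Aᵀ * D = μ • 1 := by
      rw [hAT, hD, Matrix.mul_smul, hAinv]
    have hDA : Dᵀ * A = μ • 1 := by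
      rw [hD, Matrix.transpose_smul, hiT, Matrix.smul_mul, hAinv']
    subst hF hY
    simp only [Matrix.fromBlocks_transpose, Matrix.transpose_fromCols, Matrix.transpose_fromRows,
      Matrix.fromBlocks_multiply, Matrix.fromCols_mul_fromBlocks, Matrix.fromBlocks_mul_fromRows,
      Matrix.fromRows_mul_fromCols, Matrix.fromCols_mul_fromRows, Matrix.fromRows_mul,
      Matrix.mul_fromCols, Matrix.fromBlocks_smul, Matrix.transpose_smul, Matrix.transpose_zero,
      Matrix.transpose_one, Matrix.smul_mul, Matrix.mul_smul, Matrix.mul_zero, Matrix.zero_mul,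
      Matrix.mul_one, Matrix.one_mul, add_zero, zero_add, smul_smul, smul_zero,
      Matrix.fromRows_zero, Matrix.fromCols_zero,
      hAD, hDA, hDB, Matrix.fromBlocks_inj]
    refine ⟨?_, trivial, trivial, trivial⟩
    rw [show α * (2 * α) = 2 * α ^ 2 by ring, hα, mul_comm]
end
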